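/- For a connected graph G on n vertices with edge connectivity η and algebraic connectivity ν_2 (second-smallest eigenvalue of the Laplacian L = D − A), the bound ν_2 ≥ 2η(1 − cos(π/n)) holds. -/

import Mathlib

open Finset Matrix

noncomputable def pe (n j i : ℕ) : ℝ := Real.cos ((2*(i:ℝ)+1) * j * Real.pi / (2*n))
noncomputable def plam (n j : ℕ) : ℝ := 2 - 2 * Real.cos (j * Real.pi / n)

lemma trig3 (x d : ℝ) :
    2 * Real.cos x - Real.cos (x - d) - Real.cos (x + d)
      = (2 - 2*Real.cos d) * Real.cos x := by
  rw [Real.cos_sub, Real.cos_add]; ring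

lemma pe_point (n : ℕ) (hn : 2 ≤ n) (j : ℕ) (i : ℕ) (hi : i < n) :
    (if i = 0 then 0 else pe n j i - pe n j (i-1))
      - (if i = n-1 then 0 else pe n j (i+1) - pe n j i) = plam n j * pe n j i := by
  have hn0 : (n : ℝ) ≠ 0 := by positivity
  have h3 := trig3 ((2*(i:ℝ)+1) * j * Real.pi / (2*n)) ((j:ℝ) * Real.pi / n)
  have hpe : pe n j i = Real.cos ((2*(i:ℝ)+1) * j * Real.pi / (2*n)) := rfl
  have hsucc : pe n j (i+1)
      = Real.cos ((2*(i:ℝ)+1) * j * Real.pi / (2*n) + (j:ℝ) * Real.pi / n) := by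
    unfold pe; congr 1; push_cast; field_simp; ring
  have hpred : 1 ≤ i → pe n j (i-1)
      = Real.cos ((2*(i:ℝ)+1) * j * Real.pi / (2*n) - (j:ℝ) * Real.pi / n) := by
    intro h1
    unfold pe; congr 1
    rw [Nat.cast_sub h1]; push_cast; field_simp; ring
  rcases Nat.eq_zero_or_pos i with h0 | hpos
  · subst h0
    have hne : 0 ≠ n - 1 := by omega
    rw [if_pos rfl, if_neg hne]
    have hxd : Real.cos ((2*(0:ℝ)+1) * j * Real.pi / (2*n) - (j:ℝ) * Real.pi / n)
        = Real.cos ((2*(0:ℝ)+1) * j * Real.pi / (2*n)) := by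
      rw [show (2*(0:ℝ)+1) * j * Real.pi / (2*n) - (j:ℝ) * Real.pi / n
          = -((2*(0:ℝ)+1) * j * Real.pi / (2*n)) by field_simp; ring, Real.cos_neg]
    simp only [Nat.cast_zero] at h3 hxd hpe hsucc ⊢
    rw [hxd] at h3
    rw [hpe, hsucc, plam]; linarith
  · rcases Nat.lt_or_ge i (n-1) with hlt | hge
    · have hne0 : i ≠ 0 := by omega
      have hnen : i ≠ n - 1 := by omega
      rw [if_neg hne0, if_neg hnen]
      rw [hpe, hsucc, hpred hpos, plam]; linarith
    · have hieq : i = n - 1 := by omega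
      have hne0 : i ≠ 0 := by omega
      rw [if_neg hne0, if_pos hieq]
      have hxd : Real.cos ((2*(i:ℝ)+1) * j * Real.pi / (2*n) + (j:ℝ) * Real.pi / n)
          = Real.cos ((2*(i:ℝ)+1) * j * Real.pi / (2*n)) := by
        have hicast : (i : ℝ) = (n : ℝ) - 1 := by
          rw [hieq, Nat.cast_sub (by omega : 1 ≤ n)]; push_cast; ring
        have h1 : (2*(i:ℝ)+1) * j * Real.pi / (2*n)
            = (j:ℝ) * Real.pi - j * Real.pi / (2*n) := by
          rw [hicast]; field_simp; ring
        have h2 : (2*(i:ℝ)+1) * j * Real.pi / (2*n) + (j:ℝ) * Real.pi / n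
            = (j:ℝ) * Real.pi + j * Real.pi / (2*n) := by
          rw [h1]; field_simp; ring
        rw [h2, h1, Real.cos_add, Real.cos_sub, Real.sin_nat_mul_pi]
        ring
      rw [hxd] at h3
      rw [hpe, hpred hpos, plam]; linarith
lemma pe_weak (n : ℕ) (hn : 2 ≤ n) (j : ℕ) (f : ℕ → ℝ) :
    ∑ k ∈ Finset.range (n-1), (f (k+1) - f k) * (pe n j (k+1) - pe n j k)
      = plam n j * ∑ i ∈ Finset.range n, f i * pe n j i := by
  have hn' : n - 1 + 1 = n := by omega
  have h1 : ∑ k ∈ Finset.range (n-1), f (k+1) * (pe n j (k+1) - pe n j k)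
      = ∑ i ∈ Finset.range n, f i * (if i = 0 then 0 else pe n j i - pe n j (i-1)) := by
    rw [← hn', Finset.sum_range_succ']
    simp
  have h2 : ∑ k ∈ Finset.range (n-1), f k * (pe n j (k+1) - pe n j k)
      = ∑ i ∈ Finset.range n, f i * (if i = n-1 then 0 else pe n j (i+1) - pe n j i) := by
    rw [← hn', Finset.sum_range_succ, hn', if_pos rfl, mul_zero, add_zero]
    apply Finset.sum_congr rfl
    intro k hk
    rw [if_neg (by simp at hk; omega)]
  have expand : ∀ k, (f (k+1) - f k) * (pe n j (k+1) - pe n j k)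
      = f (k+1) * (pe n j (k+1) - pe n j k) - f k * (pe n j (k+1) - pe n j k) := by
    intro k; ring
  simp_rw [expand]
  rw [Finset.sum_sub_distrib, h1, h2, ← Finset.sum_sub_distrib, Finset.mul_sum]
  apply Finset.sum_congr rfl
  intro i hi
  rw [Finset.mem_range] at hi
  rw [← mul_sub, pe_point n hn j i hi]
  ring
open scoped RealInnerProductSpace

noncomputable def pev (n : ℕ) (j : Fin n) : EuclideanSpace ℝ (Fin n) :=
  WithLp.toLp 2 (fun i => pe n j i)

noncomputable def vext (n : ℕ) (x : EuclideanSpace ℝ (Fin n)) : ℕ → ℝ :=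
  fun k => if h : k < n then x ⟨k, h⟩ else 0

noncomputable def Bv (n : ℕ) (x y : EuclideanSpace ℝ (Fin n)) : ℝ :=
  ∑ k ∈ Finset.range (n-1),
    (vext n x (k+1) - vext n x k) * (vext n y (k+1) - vext n y k)

lemma vext_lt (n : ℕ) (x : EuclideanSpace ℝ (Fin n)) (k : ℕ) (hk : k < n) :
    vext n x k = x ⟨k, hk⟩ := by
  simp [vext, hk]

lemma vext_pev (n : ℕ) (j : Fin n) (k : ℕ) (hk : k < n) :
    vext n (pev n j) k = pe n j k := by
  rw [vext_lt n _ k hk]; rfl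

lemma inner_eq_range (n : ℕ) (x y : EuclideanSpace ℝ (Fin n)) :
    ⟪x, y⟫ = ∑ i ∈ Finset.range n, vext n x i * vext n y i := by
  rw [PiLp.inner_apply]
  rw [← Fin.sum_univ_eq_sum_range (fun i => vext n x i * vext n y i) n]
  apply Finset.sum_congr rfl
  intro i _
  rw [vext_lt n x i.val i.isLt, vext_lt n y i.val i.isLt]
  simp [RCLike.inner_apply, mul_comm]

lemma Bv_weak (n : ℕ) (hn : 2 ≤ n) (x : EuclideanSpace ℝ (Fin n)) (j : Fin n) :
    Bv n x (pev n j) = plam n j * ⟪x, pev n j⟫ := by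
  have h := pe_weak n hn j (vext n x)
  rw [Bv, inner_eq_range]
  rw [Finset.sum_congr rfl (fun k hk => ?_), h, Finset.sum_congr rfl (fun i hi => ?_)]
  · rw [Finset.mem_range] at hi
    rw [vext_pev n j i hi]
  · rw [Finset.mem_range] at hk
    rw [vext_pev n j (k+1) (by omega), vext_pev n j k (by omega)]

lemma Bv_symm (n : ℕ) (x y : EuclideanSpace ℝ (Fin n)) : Bv n x y = Bv n y x := by
  unfold Bv; apply Finset.sum_congr rfl; intro k _; ring

lemma plam_injOn (n : ℕ) (hn : 2 ≤ n) (j k : Fin n) (h : plam n j = plam n k) :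
    j = k := by
  have hn0 : (0:ℝ) < n := by positivity
  have hc : Real.cos ((j:ℕ) * Real.pi / n) = Real.cos ((k:ℕ) * Real.pi / n) := by
    unfold plam at h; linarith
  have hmem : ∀ m : Fin n, ((m:ℕ) : ℝ) * Real.pi / n ∈ Set.Icc 0 Real.pi := by
    intro m
    constructor
    · positivity
    · rw [div_le_iff₀ hn0]
      have : ((m:ℕ):ℝ) ≤ n := by exact_mod_cast le_of_lt m.isLt
      nlinarith [Real.pi_pos]
  have := Real.injOn_cos (hmem j) (hmem k) hc
  have hpi := Real.pi_pos
  have hpi0 : Real.pi / n ≠ 0 := by positivity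
  have h' : ((j:ℕ):ℝ) = ((k:ℕ):ℝ) := by
    rw [mul_div_assoc, mul_div_assoc] at this; exact mul_right_cancel₀ hpi0 this
  ext; exact_mod_cast h'

lemma pev_inner_orth (n : ℕ) (hn : 2 ≤ n) (j k : Fin n) (hjk : j ≠ k) :
    ⟪pev n j, pev n k⟫ = 0 := by
  have h1 := Bv_weak n hn (pev n j) k
  have h2 := Bv_weak n hn (pev n k) j
  rw [Bv_symm] at h2
  have hsymm : ⟪pev n k, pev n j⟫ = ⟪pev n j, pev n k⟫ := real_inner_comm _ _
  rw [hsymm] at h2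
  have hne : plam n j ≠ plam n k := fun h => hjk (plam_injOn n hn j k h)
  have : (plam n k - plam n j) * ⟪pev n j, pev n k⟫ = 0 := by
    rw [sub_mul]; linarith
  rcases mul_eq_zero.mp this with h | h
  · exact absurd (by linarith [sub_eq_zero.mp h]) hne
  · exact h

lemma pev_ne_zero (n : ℕ) (hn : 2 ≤ n) (j : Fin n) : pev n j ≠ 0 := by
  intro h
  have h0 : pev n j ⟨0, by omega⟩ = 0 := by rw [h]; rfl
  have : pe n j 0 = 0 := h0
  unfold pe at this
  rw [show (2*((0:ℕ):ℝ)+1) * j * Real.pi / (2*n) = (j:ℕ) * Real.pi / (2*n) by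
    push_cast; ring] at this
  have hpos : 0 < Real.cos ((j:ℕ) * Real.pi / (2*n)) := by
    apply Real.cos_pos_of_mem_Ioo
    constructor
    · have : (0:ℝ) ≤ (j:ℕ) * Real.pi / (2*n) := by positivity
      linarith [Real.pi_pos]
    · rw [div_lt_iff₀ (by positivity)]
      have h1 : ((j:ℕ):ℝ) < n := by exact_mod_cast j.isLt
      nlinarith [Real.pi_pos]
  linarith
noncomputable def pu (n : ℕ) (j : Fin n) : EuclideanSpace ℝ (Fin n) :=
  ‖pev n j‖⁻¹ • pev n j

lemma pu_orthonormal (n : ℕ) (hn : 2 ≤ n) : Orthonormal ℝ (pu n) := by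
  rw [orthonormal_iff_ite]
  intro i j
  by_cases h : i = j
  · subst h
    have hne : ‖pev n i‖ ≠ 0 := norm_ne_zero_iff.mpr (pev_ne_zero n hn i)
    simp only [pu, real_inner_smul_left, real_inner_smul_right, if_pos rfl, ↓reduceIte]
    rw [real_inner_self_eq_norm_sq]
    field_simp
  · rw [if_neg h]
    unfold pu
    rw [real_inner_smul_left, real_inner_smul_right, pev_inner_orth n hn i j h]
    ring

lemma Bv_smul_right (n : ℕ) (x y : EuclideanSpace ℝ (Fin n)) (r : ℝ) :
    Bv n x (r • y) = r * Bv n x y := by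
  unfold Bv
  rw [Finset.mul_sum]
  apply Finset.sum_congr rfl
  intro k _
  have h : ∀ m, vext n (r • y) m = r * vext n y m := by
    intro m; unfold vext; split <;> simp
  rw [h, h]; ring

lemma Bv_add_right (n : ℕ) (x y z : EuclideanSpace ℝ (Fin n)) :
    Bv n x (y + z) = Bv n x y + Bv n x z := by
  unfold Bv
  rw [← Finset.sum_add_distrib]
  apply Finset.sum_congr rfl
  intro k _
  have h : ∀ m, vext n (y + z) m = vext n y m + vext n z m := by
    intro m; unfold vext; split <;> simp
  rw [h, h]; ring

lemma Bv_sum_right (n : ℕ) (x : EuclideanSpace ℝ (Fin n)) {ι : Type*}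
    (s : Finset ι) (f : ι → EuclideanSpace ℝ (Fin n)) :
    Bv n x (∑ j ∈ s, f j) = ∑ j ∈ s, Bv n x (f j) := by
  classical
  induction s using Finset.induction_on with
  | empty =>
      simp only [Finset.sum_empty]
      unfold Bv
      apply Finset.sum_eq_zero
      intro k _
      have h : ∀ m, vext n (0 : EuclideanSpace ℝ (Fin n)) m = 0 := by
        intro m; unfold vext; split <;> simp
      rw [h, h]; ring
  | insert _ _ hns ih =>
      rw [Finset.sum_insert hns, Finset.sum_insert hns, Bv_add_right, ih]

lemma path_key (n : ℕ) (hn : 2 ≤ n) (x : EuclideanSpace ℝ (Fin n))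
    (hx : ⟪pev n ⟨0, by omega⟩, x⟫ = 0) :
    plam n 1 * ⟪x, x⟫ ≤ Bv n x x := by
  have hON := pu_orthonormal n hn
  have hcard : Fintype.card (Fin n) = Module.finrank ℝ (EuclideanSpace ℝ (Fin n)) := by
    simp [finrank_euclideanSpace_fin]
  haveI : Nonempty (Fin n) := ⟨⟨0, by omega⟩⟩
  let b := basisOfLinearIndependentOfCardEqFinrank hON.linearIndependent hcard
  have hb : ⇑b = pu n := coe_basisOfLinearIndependentOfCardEqFinrank _ _
  set c : Fin n → ℝ := fun j => b.repr x j with hc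
  have hx_expand : ∑ j, c j • pu n j = x := by
    conv_rhs => rw [← Module.Basis.sum_repr b x]
    apply Finset.sum_congr rfl
    intro j _
    rw [hb]
  have cval : ∀ j, ⟪pu n j, x⟫ = c j := by
    intro j
    conv_lhs => rw [← hx_expand]
    exact hON.inner_right_fintype c j
  have hEnorm : ∀ j, ‖pev n j‖ ≠ 0 :=
    fun j => norm_ne_zero_iff.mpr (pev_ne_zero n hn j)
  have c0 : c ⟨0, by omega⟩ = 0 := by
    rw [← cval]
    unfold pu
    rw [real_inner_smul_left, hx]
    ring
  have Bv_x_uj : ∀ j : Fin n, Bv n x (pu n j) = plam n j * c j := by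
    intro j
    unfold pu
    rw [Bv_smul_right, Bv_weak n hn x j]
    rw [← cval j]
    unfold pu
    rw [real_inner_smul_left, real_inner_comm x (pev n j)]
    ring
  have Bv_xx : Bv n x x = ∑ j : Fin n, plam n (j:ℕ) * (c j)^2 := by
    have h1 : Bv n x x = Bv n x (∑ j, c j • pu n j) := by rw [hx_expand]
    rw [h1, Bv_sum_right]
    apply Finset.sum_congr rfl
    intro j _
    rw [Bv_smul_right, Bv_x_uj]
    ring
  have hnorm : ⟪x, x⟫ = ∑ j, (c j)^2 := by
    have h1 : ⟪x, x⟫ = ⟪∑ j, c j • pu n j, x⟫ := by rw [hx_expand]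
    rw [h1, sum_inner]
    apply Finset.sum_congr rfl
    intro j _
    rw [real_inner_smul_left, cval]
    ring
  have hmono : ∀ j : Fin n, j ≠ ⟨0, by omega⟩ → plam n 1 ≤ plam n j := by
    intro j hj
    have hj1 : 1 ≤ (j : ℕ) := by
      rcases Nat.eq_zero_or_pos (j : ℕ) with h0 | h
      · exact absurd (Fin.ext h0) hj
      · exact h
    have hn0 : (0:ℝ) < (n:ℝ) := by positivity
    have hpi := Real.pi_pos
    have hcos : Real.cos ((j:ℕ) * Real.pi / n) ≤ Real.cos ((1:ℕ) * Real.pi / n) := by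
      apply Real.cos_le_cos_of_nonneg_of_le_pi
      · positivity
      · rw [div_le_iff₀ hn0]
        have : ((j:ℕ):ℝ) ≤ n := by exact_mod_cast le_of_lt j.isLt
        nlinarith
      · have h1 : ((1:ℕ):ℝ) ≤ ((j:ℕ):ℝ) := by exact_mod_cast hj1
        gcongr
    unfold plam
    push_cast at hcos ⊢
    linarith
  rw [Bv_xx, hnorm, Finset.mul_sum, ← sub_nonneg, ← Finset.sum_sub_distrib]
  apply Finset.sum_nonneg
  intro j _
  by_cases hj : j = ⟨0, by omega⟩
  · subst hj
    rw [c0]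
    ring_nf
    exact le_refl 0
  · have h1j := hmono j hj
    nlinarith [sq_nonneg (c j)]
lemma path_ineq (n : ℕ) (hn : 2 ≤ n) (f : ℕ → ℝ)
    (hsum : ∑ i ∈ Finset.range n, f i = 0) :
    2 * (1 - Real.cos (Real.pi / n)) * ∑ i ∈ Finset.range n, (f i)^2
      ≤ ∑ k ∈ Finset.range (n-1), (f (k+1) - f k)^2 := by
  let x : EuclideanSpace ℝ (Fin n) := WithLp.toLp 2 (fun i : Fin n => f i.val)
  have hvx : ∀ k, k < n → vext n x k = f k := by
    intro k hk
    rw [vext_lt n x k hk]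
  have hx0 : ⟪pev n ⟨0, by omega⟩, x⟫ = 0 := by
    rw [inner_eq_range, ← hsum]
    apply Finset.sum_congr rfl
    intro i hi
    rw [Finset.mem_range] at hi
    rw [hvx i hi, vext_pev n _ i hi]
    have : pe n (⟨0, by omega⟩ : Fin n).val i = 1 := by
      unfold pe
      norm_num
    rw [this, one_mul]
  have key := path_key n hn x hx0
  have h1 : ⟪x, x⟫ = ∑ i ∈ Finset.range n, (f i)^2 := by
    rw [inner_eq_range]
    apply Finset.sum_congr rfl
    intro i hi
    rw [Finset.mem_range] at hi
    rw [hvx i hi]; ring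
  have h2 : Bv n x x = ∑ k ∈ Finset.range (n-1), (f (k+1) - f k)^2 := by
    unfold Bv
    apply Finset.sum_congr rfl
    intro k hk
    rw [Finset.mem_range] at hk
    rw [hvx (k+1) (by omega), hvx k (by omega)]; ring
  have h3 : plam n 1 = 2 * (1 - Real.cos (Real.pi / n)) := by
    unfold plam
    push_cast
    rw [one_mul]
    ring
  rw [h1, h2, h3] at key
  exact key
lemma not_connected_of_cut {n : ℕ} (G : SimpleGraph (Fin n)) (A : Set (Fin n))
    (a b : Fin n) (ha : a ∈ A) (hb : b ∉ A)
    (hstay : ∀ x y, G.Adj x y → x ∈ A → y ∈ A) : ¬ G.Connected := by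
  intro hc
  have key : ∀ (u w : Fin n), G.Walk u w → u ∈ A → w ∈ A := by
    intro u w p
    induction p with
    | nil => exact id
    | cons h p ih => exact fun hu => ih (hstay _ _ h hu)
  obtain ⟨p⟩ := hc.preconnected a b
  exact hb (key a b p ha)

lemma telescope_W (W : ℕ → ℝ) (p q : ℕ) (hpq : p ≤ q) :
    ∑ k ∈ Finset.Ico p q, (W (k+1) - W k) = W q - W p := by
  rw [Finset.sum_Ico_eq_sub _ hpq, Finset.sum_range_sub, Finset.sum_range_sub]
  ring
/-- For a connected graph `G` on `n` vertices with edge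
connectivity `η` (least cardinality of a set of edges whose deletion
disconnects `G`) and algebraic connectivity `ν₂` (second-smallest eigenvalue of
the Laplacian `L = D − A`, i.e. the smallest nonzero eigenvalue since `G` is
connected), one has `ν₂ ≥ 2η(1 − cos(π/n))`. -/
theorem algebraic_connectivity_ge_edge_connectivity_bound (n : ℕ) (hn : 2 ≤ n)
    (G : SimpleGraph (Fin n)) [DecidableRel G.Adj] (hconn : G.Connected)
    (L : Matrix (Fin n) (Fin n) ℝ)
    (hL : ∀ i k, L i k = if i = k then (G.degree i : ℝ)
      else if G.Adj i k then -1 else 0)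
    (η : ℕ)
    (hη : IsLeast {k : ℕ | ∃ s : Finset (Sym2 (Fin n)), ↑s ⊆ G.edgeSet ∧
        s.card = k ∧ ¬ (G.deleteEdges ↑s).Connected} η)
    (ν₂ : ℝ) (hν₂ne : ν₂ ≠ 0)
    (hev : ∃ v : Fin n → ℝ, v ≠ 0 ∧ L *ᵥ v = ν₂ • v)
    (hmin : ∀ ν : ℝ, ν ≠ 0 → (∃ v : Fin n → ℝ, v ≠ 0 ∧ L *ᵥ v = ν • v) →
        ν₂ ≤ ν) :
    2 * (η : ℝ) * (1 - Real.cos (Real.pi / n)) ≤ ν₂ := by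
  classical
  obtain ⟨v, hv0, hLv⟩ := hev
  have hLlap : L = G.lapMatrix ℝ := by
    ext i k
    rw [hL]
    by_cases h : i = k
    · subst h
      simp [SimpleGraph.lapMatrix, SimpleGraph.degMatrix, Matrix.sub_apply]
    · rw [if_neg h]
      simp only [SimpleGraph.lapMatrix, SimpleGraph.degMatrix, Matrix.sub_apply,
        Matrix.diagonal_apply_ne _ h, SimpleGraph.adjMatrix_apply]
      rw [zero_sub]
      split <;> simp
  have hq1 : v ⬝ᵥ (L *ᵥ v) = ν₂ * ∑ i, (v i)^2 := by
    rw [hLv]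
    simp only [dotProduct, Pi.smul_apply, smul_eq_mul, Finset.mul_sum]
    apply Finset.sum_congr rfl
    intro i _
    ring
  have hq2 : v ⬝ᵥ (L *ᵥ v)
      = (∑ i, ∑ j, if G.Adj i j then (v i - v j)^2 else 0)/2 := by
    rw [hLlap, ← Matrix.toLinearMap₂'_apply']
    exact G.lapMatrix_toLinearMap₂' ℝ v
  have hsym : ∀ i k, L i k = L k i := by
    intro i k
    rw [hL, hL]
    by_cases h : i = k
    · subst h; rfl
    · rw [if_neg h, if_neg (Ne.symm h), if_congr (G.adj_comm i k) rfl rfl]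
  have hrow : ∀ i, ∑ k, L i k = 0 := by
    intro i
    have h0 := congrFun (G.lapMatrix_mulVec_const_eq_zero (R := ℝ)) i
    rw [← hLlap] at h0
    simpa [Matrix.mulVec, dotProduct] using h0
  have hsumv : ∑ i, v i = 0 := by
    have h1 : ∑ i, (L *ᵥ v) i = ν₂ * ∑ i, v i := by
      rw [hLv]; simp [Finset.mul_sum]
    have h2 : ∑ i, (L *ᵥ v) i = 0 := by
      simp only [Matrix.mulVec, dotProduct]
      rw [Finset.sum_comm]
      apply Finset.sum_eq_zero
      intro k _
      rw [← Finset.sum_mul, Finset.sum_congr rfl (fun i _ => hsym i k), hrow k,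
        zero_mul]
    have h3 : ν₂ * ∑ i, v i = 0 := by rw [← h1, h2]
    exact (mul_eq_zero.mp h3).resolve_left hν₂ne
  -- sorting
  set σ : Equiv.Perm (Fin n) := Tuple.sort v with hσ
  have hmono : Monotone (v ∘ σ) := Tuple.monotone_sort v
  set W : ℕ → ℝ := fun k => if h : k < n then v (σ ⟨k, h⟩) else 0 with hWdef
  have hWv : ∀ (i : Fin n), W i.val = v (σ i) := by
    intro i
    simp only [hWdef]
    rw [dif_pos i.isLt]
  have hWd : ∀ k, k + 1 < n → 0 ≤ W (k+1) - W k := by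
    intro k h
    have hle : (⟨k, by omega⟩ : Fin n) ≤ (⟨k+1, h⟩ : Fin n) :=
      Fin.mk_le_mk.mpr (by omega)
    have e1 : W k = v (σ ⟨k, by omega⟩) := hWv ⟨k, by omega⟩
    have e2 : W (k+1) = v (σ ⟨k+1, h⟩) := hWv ⟨k+1, h⟩
    rw [e1, e2]
    exact sub_nonneg.mpr (hmono hle)
  have hWsum : ∑ k ∈ Finset.range n, W k = 0 := by
    rw [← Fin.sum_univ_eq_sum_range W n,
      Finset.sum_congr rfl (fun i _ => hWv i), Equiv.sum_comp σ v]
    exact hsumv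
  have hWsq : ∑ k ∈ Finset.range n, (W k)^2 = ∑ i, (v i)^2 := by
    rw [← Fin.sum_univ_eq_sum_range (fun k => (W k)^2) n]
    rw [Finset.sum_congr rfl (fun (i : Fin n) _ => by rw [hWv i])]
    exact Equiv.sum_comp σ (fun i => (v i)^2)
  -- the ordered pair set
  set T : Finset (Fin n × Fin n) :=
    Finset.univ.filter (fun pq => pq.1 < pq.2 ∧ G.Adj (σ pq.1) (σ pq.2)) with hT
  set F : Fin n → Fin n → ℝ :=
    fun p q => if G.Adj (σ p) (σ q) then (v (σ p) - v (σ q))^2 else 0 with hF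
  have hQ : (∑ i, ∑ j, if G.Adj i j then (v i - v j)^2 else 0)
      = 2 * ∑ pq ∈ T, (W pq.2.val - W pq.1.val)^2 := by
    have step1 : (∑ i, ∑ j, if G.Adj i j then (v i - v j)^2 else 0)
        = ∑ p, ∑ q, F p q := by
      rw [← Equiv.sum_comp σ
        (fun i => ∑ j, if G.Adj i j then (v i - v j)^2 else 0)]
      apply Finset.sum_congr rfl
      intro p _
      rw [← Equiv.sum_comp σ
        (fun j => if G.Adj (σ p) j then (v (σ p) - v j)^2 else 0)]
    have tri : ∀ p q : Fin n, F p q = (if p < q then F p q else 0)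
        + (if q < p then F p q else 0) := by
      intro p q
      rcases lt_trichotomy p q with h|h|h
      · rw [if_pos h, if_neg (asymm h)]; ring
      · subst h
        have h0 : F p p = 0 := by rw [hF]; simp [G.irrefl]
        simp [h0]
      · rw [if_neg (asymm h), if_pos h]; ring
    have hFsymm : ∀ p q, F p q = F q p := by
      intro p q
      rw [hF]
      simp only
      rw [if_congr (G.adj_comm (σ p) (σ q)) rfl rfl]
      by_cases h : G.Adj (σ q) (σ p)
      · rw [if_pos h, if_pos h]; ring
      · rw [if_neg h, if_neg h]
    have step2 : ∑ p, ∑ q, F p q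
        = 2 * ∑ p, ∑ q, (if p < q then F p q else 0) := by
      have e1 : ∑ p, ∑ q, F p q
          = (∑ p, ∑ q, (if p < q then F p q else 0))
            + ∑ p, ∑ q, (if q < p then F p q else 0) := by
        rw [← Finset.sum_add_distrib]
        apply Finset.sum_congr rfl
        intro p _
        rw [← Finset.sum_add_distrib]
        exact Finset.sum_congr rfl (fun q _ => tri p q)
      have e2 : ∑ p, ∑ q, (if q < p then F p q else 0)
          = ∑ p, ∑ q, (if p < q then F p q else 0) := by
        rw [Finset.sum_comm]
        apply Finset.sum_congr rfl
        intro p _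
        apply Finset.sum_congr rfl
        intro q _
        rw [hFsymm q p]
      rw [e1, e2]; ring
    have step3 : ∑ p, ∑ q, (if p < q then F p q else 0)
        = ∑ pq ∈ T, (W pq.2.val - W pq.1.val)^2 := by
      rw [hT, Finset.sum_filter, ← Finset.sum_product', Finset.univ_product_univ]
      apply Finset.sum_congr rfl
      intro pq _
      by_cases h1 : pq.1 < pq.2
      · by_cases h2 : G.Adj (σ pq.1) (σ pq.2)
        · rw [if_pos h1, if_pos ⟨h1, h2⟩, hF]
          simp only
          rw [if_pos h2, hWv, hWv]
          ring
        · rw [if_pos h1, if_neg (by tauto), hF]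
          simp only
          rw [if_neg h2]
      · rw [if_neg h1, if_neg (by tauto)]
    rw [step1, step2, step3]
  -- cut counting
  have hcutN : ∀ k, k < n - 1 →
      η ≤ (T.filter (fun pq => pq.1.val ≤ k ∧ k < pq.2.val)).card := by
    intro k hk
    set C := T.filter (fun pq => pq.1.val ≤ k ∧ k < pq.2.val) with hC
    set Fk : Finset (Sym2 (Fin n)) := C.image (fun pq => s(σ pq.1, σ pq.2)) with hFk
    have hCmem : ∀ pq : Fin n × Fin n, pq ∈ C ↔
        (pq.1 < pq.2 ∧ G.Adj (σ pq.1) (σ pq.2)) ∧ pq.1.val ≤ k ∧ k < pq.2.val := by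
      intro pq
      rw [hC, hT]
      simp [Finset.mem_filter]
    have hinj : Set.InjOn (fun pq : Fin n × Fin n => s(σ pq.1, σ pq.2)) ↑C := by
      intro a ha b hb hab
      rw [Finset.mem_coe, hCmem] at ha hb
      simp only [Sym2.eq_iff] at hab
      rcases hab with ⟨h1, h2⟩ | ⟨h1, h2⟩
      · exact Prod.ext (σ.injective h1) (σ.injective h2)
      · exfalso
        have e1 : a.1 = b.2 := σ.injective h1
        have e2 := congrArg Fin.val e1
        have := ha.2.1
        have := hb.2.2
        omega
    have hcard : Fk.card = C.card := Finset.card_image_of_injOn hinj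
    have hsub : ↑Fk ⊆ G.edgeSet := by
      intro e he
      rw [hFk, Finset.coe_image] at he
      obtain ⟨pq, hpq, rfl⟩ := he
      rw [Finset.mem_coe, hCmem] at hpq
      exact hpq.1.2
    have hdisc : ¬ (G.deleteEdges ↑Fk).Connected := by
      apply not_connected_of_cut _ {x | (σ.symm x).val ≤ k} (σ ⟨0, by omega⟩)
        (σ ⟨n-1, by omega⟩)
      · simp only [Set.mem_setOf_eq, Equiv.symm_apply_apply]
        omega
      · simp only [Set.mem_setOf_eq, Equiv.symm_apply_apply]
        omega
      · intro x y hxy hx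
        by_contra hy
        simp only [Set.mem_setOf_eq, not_le] at hx hy
        rw [SimpleGraph.deleteEdges_adj] at hxy
        apply hxy.2
        have hmem : (σ.symm x, σ.symm y) ∈ C := by
          rw [hCmem]
          refine ⟨⟨?_, ?_⟩, hx, hy⟩
          · change σ.symm x < σ.symm y
            rw [Fin.lt_def]; omega
          · simpa [Equiv.apply_symm_apply] using hxy.1
        rw [hFk, Finset.coe_image]
        refine ⟨(σ.symm x, σ.symm y), hmem, ?_⟩
        simp [Equiv.apply_symm_apply]
    have hle := hη.2 ⟨Fk, hsub, rfl, hdisc⟩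
    omega
  -- main chain of inequalities
  have hBstep : ∑ k ∈ Finset.range (n-1), (W (k+1) - W k)^2 * (η : ℝ)
      ≤ ∑ pq ∈ T, (W pq.2.val - W pq.1.val)^2 := by
    have h1 : ∀ pq ∈ T, ∑ kk ∈ Finset.Ico pq.1.val pq.2.val, (W (kk+1) - W kk)^2
        ≤ (W pq.2.val - W pq.1.val)^2 := by
      intro pq hpq
      rw [hT, Finset.mem_filter] at hpq
      have hlt : pq.1 < pq.2 := hpq.2.1
      have hq2n : pq.2.val < n := pq.2.isLt
      rw [← telescope_W W pq.1.val pq.2.val (le_of_lt hlt)]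
      apply Finset.sum_sq_le_sq_sum_of_nonneg
      intro kk hkk
      rw [Finset.mem_Ico] at hkk
      exact hWd kk (by omega)
    have h2 : ∀ pq ∈ T, ∑ kk ∈ Finset.Ico pq.1.val pq.2.val, (W (kk+1) - W kk)^2
        = ∑ kk ∈ Finset.range (n-1),
            if pq.1.val ≤ kk ∧ kk < pq.2.val then (W (kk+1) - W kk)^2 else 0 := by
      intro pq hpq
      rw [hT, Finset.mem_filter] at hpq
      have hq2n : pq.2.val < n := pq.2.isLt
      rw [← Finset.sum_filter]
      apply Finset.sum_congr ?_ (fun _ _ => rfl)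
      ext kk
      simp only [Finset.mem_Ico, Finset.mem_filter, Finset.mem_range]
      omega
    calc ∑ k ∈ Finset.range (n-1), (W (k+1) - W k)^2 * (η : ℝ)
        ≤ ∑ k ∈ Finset.range (n-1), (W (k+1) - W k)^2
            * ((T.filter (fun pq => pq.1.val ≤ k ∧ k < pq.2.val)).card : ℝ) := by
          apply Finset.sum_le_sum
          intro k hk
          rw [Finset.mem_range] at hk
          have := hcutN k hk
          have hcast : (η:ℝ) ≤ ((T.filter (fun pq => pq.1.val ≤ k ∧ k < pq.2.val)).card : ℝ) := by
            exact_mod_cast this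
          exact mul_le_mul_of_nonneg_left hcast (sq_nonneg _)
      _ = ∑ k ∈ Finset.range (n-1), ∑ pq ∈ T,
            (if pq.1.val ≤ k ∧ k < pq.2.val then (W (k+1) - W k)^2 else 0) := by
          apply Finset.sum_congr rfl
          intro k _
          rw [← Finset.sum_filter, Finset.sum_const, nsmul_eq_mul]
          ring
      _ = ∑ pq ∈ T, ∑ kk ∈ Finset.range (n-1),
            (if pq.1.val ≤ kk ∧ kk < pq.2.val then (W (kk+1) - W kk)^2 else 0) :=
          Finset.sum_comm
      _ = ∑ pq ∈ T, ∑ kk ∈ Finset.Ico pq.1.val pq.2.val, (W (kk+1) - W kk)^2 := by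
          exact Finset.sum_congr rfl (fun pq hpq => (h2 pq hpq).symm)
      _ ≤ ∑ pq ∈ T, (W pq.2.val - W pq.1.val)^2 := Finset.sum_le_sum h1
  have hpath := path_ineq n hn W hWsum
  have hvsq : 0 < ∑ i, (v i)^2 := by
    have hex : ∃ i, v i ≠ 0 := by
      by_contra hno
      push_neg at hno
      exact hv0 (funext hno)
    obtain ⟨i, hi⟩ := hex
    apply Finset.sum_pos' (fun j _ => sq_nonneg (v j))
    exact ⟨i, Finset.mem_univ i, by positivity⟩
  have hchain : (η:ℝ) * (2 * (1 - Real.cos (Real.pi/n))) * ∑ i, (v i)^2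
      ≤ ν₂ * ∑ i, (v i)^2 := by
    have e0 : ν₂ * ∑ i, (v i)^2 = ∑ pq ∈ T, (W pq.2.val - W pq.1.val)^2 := by
      rw [← hq1, hq2, hQ]; ring
    have e1 : (η:ℝ) * (2 * (1 - Real.cos (Real.pi/n))) * ∑ i, (v i)^2
        ≤ (η:ℝ) * ∑ k ∈ Finset.range (n-1), (W (k+1) - W k)^2 := by
      rw [← hWsq]
      have hηnn : (0:ℝ) ≤ (η:ℝ) := Nat.cast_nonneg η
      calc (η:ℝ) * (2 * (1 - Real.cos (Real.pi/n))) * ∑ kk ∈ Finset.range n, (W kk)^2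
          = (η:ℝ) * (2 * (1 - Real.cos (Real.pi/n)) * ∑ kk ∈ Finset.range n, (W kk)^2) := by ring
        _ ≤ (η:ℝ) * ∑ k ∈ Finset.range (n-1), (W (k+1) - W k)^2 :=
            mul_le_mul_of_nonneg_left hpath hηnn
    have e2 : (η:ℝ) * ∑ k ∈ Finset.range (n-1), (W (k+1) - W k)^2
        ≤ ∑ pq ∈ T, (W pq.2.val - W pq.1.val)^2 := by
      calc (η:ℝ) * ∑ k ∈ Finset.range (n-1), (W (k+1) - W k)^2
          = ∑ k ∈ Finset.range (n-1), (W (k+1) - W k)^2 * (η:ℝ) := by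
            rw [Finset.mul_sum]
            exact Finset.sum_congr rfl (fun k _ => mul_comm _ _)
        _ ≤ _ := hBstep
    rw [e0]
    exact le_trans e1 e2
  have hfinal : (η:ℝ) * (2 * (1 - Real.cos (Real.pi/n))) ≤ ν₂ :=
    le_of_mul_le_mul_right (by linarith [hchain]) hvsq
  linarith [hfinal]
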